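/- For every integer k ≥ 2, the expected number of k-cliques of the one-step partial duplication G' of G satisfies E[C_k(G')] = (1 + (k/n) · p^{k-1}) · C_k(G); explicitly, (1/n) · Σ_{v∈V} Σ_{S ⊆ N(v)} p^{|S|} (1-p)^{|N(v)|-|S|} · C_k(G_{v,S}) = (1 + (k/n) · p^{k-1}) · C_k(G). -/

import Mathlib

open Finset

/-- The graph `G_{v,S}` obtained from `G` by adding one new vertex (`none`) adjacent
exactly to the vertices of `S`. -/
def SimpleGraph.extendVertex {V : Type*} (G : SimpleGraph V) (S : Finset V) :
    SimpleGraph (Option V) where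
  Adj x y :=
    match x, y with
    | some u, some w => G.Adj u w
    | some u, none => u ∈ S
    | none, some w => w ∈ S
    | none, none => False
  symm := ⟨by
    rintro (_ | u) (_ | w) h
    · exact h
    · exact h
    · exact h
    · exact G.symm.symm _ _ h⟩
  loopless := ⟨by
    rintro (_ | u) h
    · exact h
    · exact G.loopless.irrefl u h⟩

instance {V : Type*} [DecidableEq V] (G : SimpleGraph V) [DecidableRel G.Adj] (S : Finset V) :
    DecidableRel (G.extendVertex S).Adj := fun x y =>
  match x, y with
  | some u, some w => inferInstanceAs (Decidable (G.Adj u w))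
  | some u, none => inferInstanceAs (Decidable (u ∈ S))
  | none, some w => inferInstanceAs (Decidable (w ∈ S))
  | none, none => inferInstanceAs (Decidable False)

section Aux

set_option linter.unusedSectionVars false

lemma weight_sum {V : Type*} [DecidableEq V] (A : Finset V) (p : ℝ) :
    ∑ S ∈ A.powerset, p ^ S.card * (1 - p) ^ (A.card - S.card) = 1 := by
  calc ∑ S ∈ A.powerset, p ^ S.card * (1 - p) ^ (A.card - S.card)
      = ∑ S ∈ A.powerset, (∏ _i ∈ S, p) * (∏ _i ∈ A \ S, (1-p)) := by
        refine sum_congr rfl fun S hS => ?_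
        rw [prod_const, prod_const, card_sdiff_of_subset (mem_powerset.1 hS)]
    _ = ∏ _i ∈ A, (p + (1-p)) := (prod_add _ _ _).symm
    _ = 1 := by simp

lemma weight_sum_subset {V : Type*} [DecidableEq V] (A T : Finset V) (hT : T ⊆ A) (p : ℝ) :
    ∑ S ∈ A.powerset, (if T ⊆ S then p ^ S.card * (1 - p) ^ (A.card - S.card) else 0)
      = p ^ T.card := by
  rw [← Finset.sum_filter]
  have himg : A.powerset.filter (fun S => T ⊆ S) = (A \ T).powerset.image (· ∪ T) := by
    ext S
    simp only [mem_filter, mem_powerset, mem_image]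
    constructor
    · rintro ⟨hSA, hTS⟩
      exact ⟨S \ T, sdiff_subset_sdiff hSA le_rfl, by
        rw [sdiff_union_self_eq_union, union_eq_left.2 hTS]⟩
    · rintro ⟨S', hS', rfl⟩
      constructor
      · exact union_subset (hS'.trans sdiff_subset) hT
      · exact subset_union_right
  rw [himg, sum_image (by
    intro x hx y hy hxy
    have hx' : Disjoint x T := (sdiff_disjoint).mono_left (mem_powerset.1 hx)
    have hy' : Disjoint y T := (sdiff_disjoint).mono_left (mem_powerset.1 hy)
    have := congrArg (· \ T) hxy
    simpa [union_sdiff_right, hx'.sdiff_eq_left, hy'.sdiff_eq_left] using this)]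
  have : ∀ S' ∈ (A \ T).powerset,
      p ^ (S' ∪ T).card * (1 - p) ^ (A.card - (S' ∪ T).card)
        = p ^ T.card * (p ^ S'.card * (1 - p) ^ ((A \ T).card - S'.card)) := by
    intro S' hS'
    have hd : Disjoint S' T := (sdiff_disjoint).mono_left (mem_powerset.1 hS')
    rw [card_union_of_disjoint hd, card_sdiff_of_subset hT, pow_add]
    ring_nf
    congr 2
    omega
  rw [sum_congr rfl this, ← mul_sum, weight_sum, mul_one]

variable {V : Type*} [Fintype V] [DecidableEq V] (G : SimpleGraph V) [DecidableRel G.Adj]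
  (S : Finset V)

lemma preimage_image_some {W : Type*} [DecidableEq W] (T : Finset W) :
    (T.image some).preimage some (Option.some_injective W).injOn = T := by
  ext u; simp

lemma image_some_clique {k : ℕ} {K : Finset V} (h : G.IsNClique k K) :
    (G.extendVertex S).IsNClique k (K.image some) := by
  constructor
  · intro x hx y hy hxy
    simp only [coe_image, Set.mem_image, mem_coe] at hx hy
    obtain ⟨u, hu, rfl⟩ := hx
    obtain ⟨w, hw, rfl⟩ := hy
    exact h.1 hu hw (fun e => hxy (by rw [e]))
  · rw [card_image_of_injective _ (Option.some_injective V), h.2]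

lemma card_clique_extend (k : ℕ) (hk : 1 ≤ k) :
    (((G.extendVertex S).cliqueFinset k).card : ℕ)
      = (G.cliqueFinset k).card + ((G.cliqueFinset (k-1)).filter (· ⊆ S)).card := by
  classical
  rw [← Finset.card_filter_add_card_filter_not
    (s := (G.extendVertex S).cliqueFinset k) (p := fun K => none ∉ K)]
  congr 1
  · symm
    apply Finset.card_nbij' (i := fun K => K.image some)
      (j := fun K => K.preimage some (Option.some_injective V).injOn)
    · intro K hK
      rw [mem_coe, SimpleGraph.mem_cliqueFinset_iff] at hK
      simp only [mem_coe, mem_filter, SimpleGraph.mem_cliqueFinset_iff]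
      refine ⟨image_some_clique G S hK, ?_⟩
      simp
    · intro K hK
      simp only [mem_coe, mem_filter, SimpleGraph.mem_cliqueFinset_iff] at hK
      obtain ⟨⟨hc, hcard⟩, hnone⟩ := hK
      have himg : (K.preimage some (Option.some_injective V).injOn).image some = K := by
        rw [Finset.image_preimage]
        refine Finset.filter_true_of_mem fun x hx => ?_
        cases x with
        | none => exact absurd hx hnone
        | some u => exact ⟨u, rfl⟩
      rw [mem_coe, SimpleGraph.mem_cliqueFinset_iff]
      constructor
      · intro u hu w hw huw
        simp only [mem_coe, mem_preimage] at hu hw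
        exact hc hu hw (fun e => huw (Option.some_injective V e))
      · rw [← card_image_of_injective _ (Option.some_injective V), himg, hcard]
    · intro K _
      exact preimage_image_some K
    · intro K hK
      simp only [mem_coe, mem_filter] at hK
      beta_reduce
      rw [Finset.image_preimage]
      refine Finset.filter_true_of_mem fun x hx => ?_
      cases x with
      | none => exact absurd hx hK.2
      | some u => exact ⟨u, rfl⟩
  · symm
    apply Finset.card_nbij' (i := fun T => insert none (T.image some))
      (j := fun K => (K.erase none).preimage some (Option.some_injective V).injOn)
    · intro T hT
      simp only [mem_coe, mem_filter, SimpleGraph.mem_cliqueFinset_iff] at hT ⊢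
      obtain ⟨hT1, hT2⟩ := hT
      have := (image_some_clique G S hT1).insert (a := none) (by
        intro b hb
        simp only [mem_image] at hb
        obtain ⟨u, hu, rfl⟩ := hb
        exact hT2 hu)
      rw [Nat.sub_add_cancel hk] at this
      exact ⟨this, by simp⟩
    · intro K hK
      simp only [mem_coe, mem_filter, SimpleGraph.mem_cliqueFinset_iff, not_not] at hK ⊢
      obtain ⟨⟨hc, hcard⟩, hnone⟩ := hK
      refine ⟨⟨?_, ?_⟩, ?_⟩
      · intro u hu w hw huw
        simp only [mem_coe, mem_preimage, mem_erase] at hu hw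
        exact hc hu.2 hw.2 (fun e => huw (Option.some_injective V e))
      · have himg : ((K.erase none).preimage some
            (Option.some_injective V).injOn).image some = K.erase none := by
          rw [Finset.image_preimage]
          refine Finset.filter_true_of_mem fun x hx => ?_
          cases x with
          | none => exact absurd rfl (mem_erase.1 hx).1
          | some u => exact ⟨u, rfl⟩
        rw [← card_image_of_injective _ (Option.some_injective V), himg,
          card_erase_of_mem hnone, hcard]
      · intro u hu
        simp only [mem_preimage, mem_erase] at hu
        have := hc hu.2 hnone (by simp)
        exact this
    · intro T hT
      beta_reduce
      rw [Finset.erase_insert (by simp), preimage_image_some]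
    · intro K hK
      simp only [mem_coe, mem_filter, not_not] at hK
      have himg : ((K.erase none).preimage some
          (Option.some_injective V).injOn).image some = K.erase none := by
        rw [Finset.image_preimage]
        refine Finset.filter_true_of_mem fun x hx => ?_
        cases x with
        | none => exact absurd rfl (mem_erase.1 hx).1
        | some u => exact ⟨u, rfl⟩
      beta_reduce
      rw [himg, Finset.insert_erase hK.2]

lemma double_count (k : ℕ) (hk : 1 ≤ k) :
    ∑ v : V, ((G.cliqueFinset (k-1)).filter (· ⊆ G.neighborFinset v)).card
      = k * (G.cliqueFinset k).card := by
  classical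
  have h1 : ∑ v : V, ((G.cliqueFinset (k-1)).filter (· ⊆ G.neighborFinset v)).card
      = ((univ : Finset V).sigma
          (fun v => (G.cliqueFinset (k-1)).filter (· ⊆ G.neighborFinset v))).card := by
    rw [Finset.card_sigma]
  have h2 : k * (G.cliqueFinset k).card
      = ((G.cliqueFinset k).sigma (fun K => K)).card := by
    rw [Finset.card_sigma]
    rw [Finset.sum_congr rfl (fun K hK => (SimpleGraph.mem_cliqueFinset_iff.1 hK).2),
      Finset.sum_const, smul_eq_mul, mul_comm]
  rw [h1, h2]
  apply Finset.card_nbij' (i := fun x => ⟨insert x.1 x.2, x.1⟩)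
    (j := fun x => ⟨x.2, x.1.erase x.2⟩)
  · rintro ⟨v, T⟩ hx
    simp only [mem_coe, mem_sigma, mem_filter, SimpleGraph.mem_cliqueFinset_iff, mem_univ,
      true_and] at hx ⊢
    obtain ⟨hT, hTN⟩ := hx
    refine ⟨?_, mem_insert_self _ _⟩
    have := hT.insert (a := v) (fun b hb => by
      have := hTN hb; rw [SimpleGraph.mem_neighborFinset] at this; exact this)
    rwa [Nat.sub_add_cancel hk] at this
  · rintro ⟨K, v⟩ hx
    simp only [mem_coe, mem_sigma, SimpleGraph.mem_cliqueFinset_iff] at hx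
    obtain ⟨hK, hv⟩ := hx
    simp only [mem_coe, mem_sigma, mem_univ, mem_filter, SimpleGraph.mem_cliqueFinset_iff, true_and]
    refine ⟨⟨hK.1.subset (erase_subset _ _), by rw [card_erase_of_mem hv, hK.2]⟩, ?_⟩
    intro w hw
    rw [SimpleGraph.mem_neighborFinset]
    exact (hK.1 (mem_erase.1 hw).2 hv (mem_erase.1 hw).1).symm
  · rintro ⟨v, T⟩ hx
    simp only [mem_coe, mem_sigma, mem_filter, mem_univ, true_and] at hx
    have hvT : v ∉ T := fun h => G.loopless.irrefl v (by simpa using hx.2 h)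
    simp [Finset.erase_insert hvT]
  · rintro ⟨K, v⟩ hx
    simp only [mem_coe, mem_sigma] at hx
    simp [Finset.insert_erase hx.2]

end Aux

/-- For `k ≥ 2`, the expected number of `k`-cliques of the one-step partial duplication
of `G` equals `(1 + (k/n)·p^{k-1}) · C_k(G)`. -/
theorem stmt_11 {V : Type*} [Fintype V] [DecidableEq V]
    (G : SimpleGraph V) [DecidableRel G.Adj]
    (hV : 1 ≤ Fintype.card V) (p : ℝ) (hp0 : 0 ≤ p) (hp1 : p ≤ 1)
    (k : ℕ) (hk : 2 ≤ k) :
    (1 / (Fintype.card V : ℝ)) *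
      ∑ v : V, ∑ S ∈ (G.neighborFinset v).powerset,
        p ^ S.card * (1 - p) ^ (G.degree v - S.card) *
          (((G.extendVertex S).cliqueFinset k).card : ℝ)
      = (1 + (k : ℝ) / (Fintype.card V : ℝ) * p ^ (k - 1)) *
          ((G.cliqueFinset k).card : ℝ) := by
  classical
  have hk1 : 1 ≤ k := le_trans one_le_two hk
  have key : ∀ v : V, ∑ S ∈ (G.neighborFinset v).powerset,
      p ^ S.card * (1 - p) ^ (G.degree v - S.card) *
        (((G.extendVertex S).cliqueFinset k).card : ℝ)
      = ((G.cliqueFinset k).card : ℝ)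
        + p ^ (k-1) *
            (((G.cliqueFinset (k-1)).filter (· ⊆ G.neighborFinset v)).card : ℝ) := by
    intro v
    have hdeg : G.degree v = (G.neighborFinset v).card := rfl
    have step1 : ∀ S ∈ (G.neighborFinset v).powerset,
        p ^ S.card * (1 - p) ^ (G.degree v - S.card) *
          (((G.extendVertex S).cliqueFinset k).card : ℝ)
        = p ^ S.card * (1 - p) ^ ((G.neighborFinset v).card - S.card) *
            ((G.cliqueFinset k).card : ℝ)
          + ∑ T ∈ G.cliqueFinset (k-1),
              (if T ⊆ S then
                p ^ S.card * (1 - p) ^ ((G.neighborFinset v).card - S.card) else 0) := by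
      intro S hS
      rw [hdeg, card_clique_extend G S k hk1]
      push_cast
      rw [mul_add]
      congr 1
      rw [Finset.card_filter]
      push_cast
      rw [Finset.mul_sum]
      refine sum_congr rfl fun T hT => ?_
      split <;> simp
    rw [sum_congr rfl step1, Finset.sum_add_distrib, ← Finset.sum_mul, weight_sum, one_mul]
    congr 1
    rw [Finset.sum_comm]
    have step2 : ∀ T ∈ G.cliqueFinset (k-1),
        ∑ S ∈ (G.neighborFinset v).powerset,
          (if T ⊆ S then p ^ S.card * (1-p) ^ ((G.neighborFinset v).card - S.card) else 0)
        = if T ⊆ G.neighborFinset v then p ^ (k-1) else 0 := by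
      intro T hT
      by_cases hTN : T ⊆ G.neighborFinset v
      · rw [if_pos hTN, ← (SimpleGraph.mem_cliqueFinset_iff.1 hT).2]
        exact weight_sum_subset _ _ hTN p
      · rw [if_neg hTN]
        apply Finset.sum_eq_zero
        intro S hS
        rw [if_neg (fun hTS => hTN (hTS.trans (mem_powerset.1 hS)))]
    rw [sum_congr rfl step2, ← Finset.sum_filter, Finset.sum_const, nsmul_eq_mul, mul_comm]
  rw [sum_congr rfl (fun v _ => key v), Finset.sum_add_distrib, Finset.sum_const,
    ← Finset.mul_sum, ← Nat.cast_sum _ _, double_count G k hk1]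
  have hn : ((Fintype.card V : ℝ)) ≠ 0 := by positivity
  push_cast
  field_simp
  rw [Finset.card_univ]
  ring
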